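/- arXiv:2405.08583 — 4 statements merged into one kernel-verified Lean document; each statement's English description precedes it below -/
import Mathlib

section
/- Let n ≥ 2, let I ⊆ ℝ be a nondegenerate interval, and let f = (f_1,…,f_n) satisfy condition (⋆). The generalized quasi-arithmetic mean M_f is a quasi-arithmetic mean (i.e., equal to M_g for some g = (φ,…,φ) with φ : I → ℝ continuous and strictly monotone) if and only if there exist constants D_1,…,D_n ∈ ℝ such that f_k = f_1 + D_k for k = 1,…,n. -/
open Finset

/-- Condition (⋆): the functions are continuous, monotone in the same sense, and
not simultaneously constant on any nondegenerate subinterval of `I`. -/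
def CondStar {n : ℕ} (I : Set ℝ) (f : Fin n → ℝ → ℝ) : Prop :=
  (∀ k, ContinuousOn (f k) I) ∧
  ((∀ k, MonotoneOn (f k) I) ∨ (∀ k, AntitoneOn (f k) I)) ∧
  (∀ a b : ℝ, a ∈ I → b ∈ I → a < b →
    ∃ k, ∃ s ∈ Set.Icc a b, ∃ t ∈ Set.Icc a b, f k s ≠ f k t)

/-- `F = f₁ + ⋯ + fₙ`. -/
noncomputable def Fsum {n : ℕ} (f : Fin n → ℝ → ℝ) : ℝ → ℝ := fun t => ∑ k, f k t

/-- The generalized quasi-arithmetic mean `M_f(x) = F⁻¹(f₁(x₁) + ⋯ + fₙ(xₙ))`. -/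
noncomputable def Mf {n : ℕ} (I : Set ℝ) (f : Fin n → ℝ → ℝ) (x : Fin n → ℝ) : ℝ :=
  Function.invFunOn (Fsum f) I (∑ k, f k (x k))

/-- A mean `M` on `Iⁿ` is `σ`-balanced if for all `x ∈ Iⁿ`, with `u := M x`,
`M (M (u_{σ(1)}(x,u)), …, M (u_{σ(n)}(x,u))) = u`, where `u_k(x,t)` replaces the
`k`-th coordinate of `x` by `t`. -/
def SigmaBalanced {n : ℕ} (I : Set ℝ) (σ : Equiv.Perm (Fin n))
    (M : (Fin n → ℝ) → ℝ) : Prop :=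
  ∀ x : Fin n → ℝ, (∀ k, x k ∈ I) →
    M (fun k => M (Function.update x (σ k) (M x))) = M x

/-- `v_k(x) := M_f(u_k(x, M_f(x)))`. -/
noncomputable def vmap {n : ℕ} (I : Set ℝ) (f : Fin n → ℝ → ℝ) (k : Fin n)
    (x : Fin n → ℝ) : ℝ :=
  Mf I f (Function.update x k (Mf I f x))

lemma fsum_exists_preimage {n : ℕ} (hn0 : n ≠ 0) {I : Set ℝ} (hI : I.OrdConnected)
    {f : Fin n → ℝ → ℝ} (hf : CondStar I f) (x : Fin n → ℝ) (hx : ∀ k, x k ∈ I) :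
    ∃ u ∈ I, Fsum f u = ∑ k, f k (x k) := by
  have hne : Nonempty (Fin n) := ⟨⟨0, Nat.pos_of_ne_zero hn0⟩⟩
  obtain ⟨p, -, hp⟩ := Finset.exists_min_image univ x ⟨Classical.arbitrary _, mem_univ _⟩
  obtain ⟨q, -, hq⟩ := Finset.exists_max_image univ x ⟨Classical.arbitrary _, mem_univ _⟩
  have hpq : x p ≤ x q := hp q (mem_univ q)
  have hsub : Set.Icc (x p) (x q) ⊆ I := hI.out (hx p) (hx q)
  have hc : ContinuousOn (Fsum f) (Set.Icc (x p) (x q)) :=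
    (continuousOn_finset_sum univ fun k _ => hf.1 k).mono hsub
  rcases hf.2.1 with hm | hm
  · have h1 : Fsum f (x p) ≤ ∑ k, f k (x k) :=
      Finset.sum_le_sum fun k _ => hm k (hx p) (hx k) (hp k (mem_univ k))
    have h2 : (∑ k, f k (x k)) ≤ Fsum f (x q) :=
      Finset.sum_le_sum fun k _ => hm k (hx k) (hx q) (hq k (mem_univ k))
    obtain ⟨u, hu, hFu⟩ := intermediate_value_Icc hpq hc ⟨h1, h2⟩
    exact ⟨u, hsub hu, hFu⟩
  · have h1 : Fsum f (x q) ≤ ∑ k, f k (x k) :=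
      Finset.sum_le_sum fun k _ => hm k (hx k) (hx q) (hq k (mem_univ k))
    have h2 : (∑ k, f k (x k)) ≤ Fsum f (x p) :=
      Finset.sum_le_sum fun k _ => hm k (hx p) (hx k) (hp k (mem_univ k))
    obtain ⟨u, hu, hFu⟩ := intermediate_value_Icc' hpq hc ⟨h1, h2⟩
    exact ⟨u, hsub hu, hFu⟩

lemma Mf_spec {n : ℕ} (hn0 : n ≠ 0) {I : Set ℝ} (hI : I.OrdConnected)
    {f : Fin n → ℝ → ℝ} (hf : CondStar I f) (x : Fin n → ℝ) (hx : ∀ k, x k ∈ I) :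
    Mf I f x ∈ I ∧ Fsum f (Mf I f x) = ∑ k, f k (x k) := by
  have hne : Nonempty ℝ := inferInstance
  obtain ⟨u, hu, hFu⟩ := fsum_exists_preimage hn0 hI hf x hx
  exact ⟨Function.invFunOn_mem ⟨u, hu, hFu⟩, Function.invFunOn_eq ⟨u, hu, hFu⟩⟩

/-- Lemma, Theorem D of [MatPal15]: `M_f` is a quasi-arithmetic mean iff
there are constants `D_k` with `f_k = f_1 + D_k` on `I`. -/
theorem stmt2 {n : ℕ} (hn : 2 ≤ n) (I : Set ℝ) (hI : I.OrdConnected)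
    (hne : ∃ a ∈ I, ∃ b ∈ I, a < b)
    (f : Fin n → ℝ → ℝ) (hf : CondStar I f) :
    (∃ φ : ℝ → ℝ, ContinuousOn φ I ∧ (StrictMonoOn φ I ∨ StrictAntiOn φ I) ∧
        ∀ x : Fin n → ℝ, (∀ k, x k ∈ I) →
          Mf I f x = Mf I (fun _ : Fin n => φ) x) ↔
      ∃ D : Fin n → ℝ, ∀ k, ∀ t ∈ I, f k t = f ⟨0, by omega⟩ t + D k := by
  have hn0 : n ≠ 0 := by omega
  set z : Fin n := ⟨0, by omega⟩ with hz
  constructor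
  · rintro ⟨φ, hφc, hφm, hMeq⟩
    obtain ⟨a, haI, -, -, -⟩ := hne
    refine ⟨fun k => f k a - f z a, ?_⟩
    intro k t htI
    rcases eq_or_ne k z with rfl | hkz
    · ring
    have key : ∀ s ∈ I, ∀ t' ∈ I, f z s + f k t' = f z t' + f k s := by
      intro s hsI t' ht'I
      set x : Fin n → ℝ := fun i => if i = z then s else if i = k then t' else s with hxdef
      have hxI : ∀ i, x i ∈ I := by
        intro i; simp only [hxdef]; split_ifs <;> assumption
      set σ : Equiv.Perm (Fin n) := Equiv.swap z k with hσ
      have hx'I : ∀ i, (x ∘ σ) i ∈ I := fun i => hxI _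
      have h1 := hMeq x hxI
      have h2 := hMeq (x ∘ σ) hx'I
      have hsum : ∑ i, φ ((x ∘ σ) i) = ∑ i, φ (x i) := Equiv.sum_comp σ (fun i => φ (x i))
      have h3 : Mf I (fun _ : Fin n => φ) (x ∘ σ) = Mf I (fun _ : Fin n => φ) x := by
        unfold Mf
        exact congrArg _ hsum
      have h4 : Mf I f x = Mf I f (x ∘ σ) := by rw [h1, ← h3, ← h2]
      have hs1 := (Mf_spec hn0 hI hf x hxI).2
      have hs2 := (Mf_spec hn0 hI hf (x ∘ σ) hx'I).2
      have h5 : ∑ i, f i (x i) = ∑ i, f i ((x ∘ σ) i) := by rw [← hs1, ← hs2, h4]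
      have h6 : ∑ i, (f i (x i) - f i ((x ∘ σ) i)) = 0 := by
        rw [Finset.sum_sub_distrib, h5, sub_self]
      have h7 : ∑ i, (f i (x i) - f i ((x ∘ σ) i))
          = ∑ i ∈ ({z, k} : Finset (Fin n)), (f i (x i) - f i ((x ∘ σ) i)) := by
        symm
        apply Finset.sum_subset (subset_univ _)
        intro i _ hi
        simp only [mem_insert, mem_singleton] at hi
        push_neg at hi
        have hxi : (x ∘ σ) i = x i := by
          simp only [Function.comp_apply, hσ, Equiv.swap_apply_of_ne_of_ne hi.1 hi.2]
        rw [hxi, sub_self]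
      have hxz : x z = s := by simp [hxdef]
      have hxk : x k = t' := by simp [hxdef, hkz]
      have hσz : (x ∘ σ) z = t' := by
        simp only [Function.comp_apply, hσ, Equiv.swap_apply_left]
        exact hxk
      have hσk : (x ∘ σ) k = s := by
        simp only [Function.comp_apply, hσ, Equiv.swap_apply_right]
        exact hxz
      rw [h7, Finset.sum_pair (Ne.symm hkz), hxz, hxk, hσz, hσk] at h6
      linarith
    have h := key a haI t htI
    show f k t = f z t + (f k a - f z a)
    linarith
  · rintro ⟨D, hD⟩
    set φ := f z with hφ
    have hconst : ∀ s ∈ I, ∀ t ∈ I, s < t → φ s = φ t → False := by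
      intro s hs t ht hst hφeq
      obtain ⟨k, a', ha', b', hb', hab'⟩ := hf.2.2 s t hs ht hst
      have hsub : Set.Icc s t ⊆ I := hI.out hs ht
      have hφcc : ∀ c ∈ Set.Icc s t, φ c = φ s := by
        intro c hc
        have hφeq' : f z s = f z t := hφeq
        show f z c = f z s
        rcases hf.2.1 with hm | hm
        · have h1 := hm z hs (hsub hc) hc.1
          have h2 := hm z (hsub hc) ht hc.2
          exact le_antisymm (h2.trans_eq hφeq'.symm) h1
        · have h1 := hm z hs (hsub hc) hc.1
          have h2 := hm z (hsub hc) ht hc.2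
          exact le_antisymm h1 (hφeq'.trans_le h2)
      have e1 : f k a' = φ s + D k := by rw [hD k a' (hsub ha'), hφcc a' ha']
      have e2 : f k b' = φ s + D k := by rw [hD k b' (hsub hb'), hφcc b' hb']
      exact hab' (e1.trans e2.symm)
    have hmono : StrictMonoOn φ I ∨ StrictAntiOn φ I := by
      rcases hf.2.1 with hm | hm
      · left; intro s hs t ht hst
        rcases lt_or_eq_of_le (hm z hs ht hst.le) with h | h
        · exact h
        · exact absurd h (fun h => hconst s hs t ht hst h)
      · right; intro s hs t ht hst
        rcases lt_or_eq_of_le (hm z hs ht hst.le) with h | h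
        · exact h
        · exact absurd h.symm (fun h => hconst s hs t ht hst h)
    refine ⟨φ, hf.1 z, hmono, ?_⟩
    intro x hx
    obtain ⟨hmem, heq⟩ := Mf_spec hn0 hI hf x hx
    set u := Mf I f x with hu
    have h1 : Fsum f u = (∑ _k : Fin n, φ u) + ∑ k, D k := by
      unfold Fsum
      rw [← Finset.sum_add_distrib]
      exact Finset.sum_congr rfl fun k _ => hD k u hmem
    have h2 : (∑ k, f k (x k)) = (∑ k, φ (x k)) + ∑ k, D k := by
      rw [← Finset.sum_add_distrib]
      exact Finset.sum_congr rfl fun k _ => hD k (x k) (hx k)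
    have h3 : Fsum (fun _ : Fin n => φ) u = ∑ k, φ (x k) := by
      show (∑ _k : Fin n, φ u) = ∑ k, φ (x k)
      rw [h1, h2] at heq
      linarith
    have hinj : Set.InjOn (Fsum (fun _ : Fin n => φ)) I := by
      intro s hs t ht hst
      have hcs : (n : ℝ) * φ s = n * φ t := by
        simpa [Fsum, Finset.sum_const, nsmul_eq_mul] using hst
      have hφst : φ s = φ t :=
        mul_left_cancel₀ (Nat.cast_ne_zero.2 hn0) hcs
      rcases hmono with h | h
      · exact h.injOn hs ht hφst
      · exact h.injOn hs ht hφst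
    have hex : ∃ c ∈ I, Fsum (fun _ : Fin n => φ) c = ∑ k, (fun _ : Fin n => φ) k (x k) :=
      ⟨u, hmem, by simpa using h3⟩
    have hmem' : Mf I (fun _ : Fin n => φ) x ∈ I := Function.invFunOn_mem hex
    have heq' : Fsum (fun _ : Fin n => φ) (Mf I (fun _ : Fin n => φ) x)
        = ∑ k, (fun _ : Fin n => φ) k (x k) := Function.invFunOn_eq hex
    refine hinj hmem hmem' ?_
    rw [h3, heq']
end

section
/- Let I ⊆ ℝ be a nondegenerate interval and t ∈ [0,1], and define the symmetric mean M : I² → ℝ by M(x,y) := t·min(x,y) + (1−t)·max(x,y). Then M is balanced, i.e., M(M(x,M(x,y)),M(M(x,y),y)) = M(x,y) for all (x,y) ∈ I², if and only if t ∈ {0, 1/2, 1}. -/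
open Finset

/-- The mean `M(x,y) = t·min(x,y) + (1−t)·max(x,y)`. -/
noncomputable def tmm (t x y : ℝ) : ℝ := t * min x y + (1 - t) * max x y

/-- `M(x,y) = t·min(x,y)+(1−t)·max(x,y)` is balanced (satisfies Aumann's
equation) on `I²` iff `t ∈ {0, 1/2, 1}`. -/
theorem stmt6 (I : Set ℝ) (hI : I.OrdConnected) (hne : ∃ a ∈ I, ∃ b ∈ I, a < b)
    (t : ℝ) (ht : t ∈ Set.Icc (0 : ℝ) 1) :
    (∀ x ∈ I, ∀ y ∈ I,
        tmm t (tmm t x (tmm t x y)) (tmm t (tmm t x y) y) = tmm t x y) ↔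
      t = 0 ∨ t = 1 / 2 ∨ t = 1 := by
  obtain ⟨h0, h1⟩ := ht
  constructor
  · intro h
    obtain ⟨a, ha, b, hb, hab⟩ := hne
    have h := h a ha b hb
    have hmin : min a b = a := min_eq_left hab.le
    have hmax : max a b = b := max_eq_right hab.le
    set m := t * a + (1 - t) * b with hm
    have hm1 : tmm t a b = m := by simp [tmm, hmin, hmax, hm]
    have ham : a ≤ m := by nlinarith
    have hmb : m ≤ b := by nlinarith
    set u := t * a + (1 - t) * m with hu
    set v := t * m + (1 - t) * b with hv
    have hu1 : tmm t a m = u := by simp [tmm, min_eq_left ham, max_eq_right ham, hu]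
    have hv1 : tmm t m b = v := by simp [tmm, min_eq_left hmb, max_eq_right hmb, hv]
    have huv : u ≤ v := by nlinarith
    rw [hm1, hu1, hv1] at h
    have hfin : t * u + (1 - t) * v = m := by
      rw [← h]; simp [tmm, min_eq_left huv, max_eq_right huv]
    have key : t * (2 * t - 1) * (t - 1) * (b - a) = 0 := by
      rw [hu, hv, hm] at hfin; nlinarith [hfin]
    have hba : b - a ≠ 0 := sub_ne_zero.2 hab.ne'
    have : t * (2 * t - 1) * (t - 1) = 0 := by
      rcases mul_eq_zero.1 key with h' | h'
      · exact h'
      · exact absurd h' hba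
    rcases mul_eq_zero.1 this with h' | h'
    · rcases mul_eq_zero.1 h' with h' | h'
      · exact Or.inl h'
      · exact Or.inr (Or.inl (by linarith))
    · exact Or.inr (Or.inr (by linarith))
  · rintro (rfl | rfl | rfl) <;> intro x hx y hy
    · have key : ∀ u v : ℝ, tmm 0 u v = max u v := by intro u v; simp [tmm]
      rw [key, key, key, key]
      rcases le_total x y with h' | h' <;>
        simp [max_eq_right h', max_eq_left h', max_self]
    · have key : ∀ u v : ℝ, tmm (1/2) u v = (u + v) / 2 := by
        intro u v
        have := min_add_max u v
        unfold tmm; linarith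
      rw [key, key, key, key]; ring
    · have key : ∀ u v : ℝ, tmm 1 u v = min u v := by intro u v; simp [tmm]
      rw [key, key, key, key]
      rcases le_total x y with h' | h' <;>
        simp [min_eq_left h', min_eq_right h', min_self]
end

section
/- Let n ≥ 2, let I ⊆ ℝ be a nondegenerate interval, and let f = (f_1,…,f_n) satisfy condition (⋆). For every (d_1,…,d_n) ∈ F(I)ⁿ, the system of equations d_k = y_1 + … + y_{k−1} + z_k(y) + y_{k+1} + … + y_n (k = 1,…,n), in unknowns y_k ∈ f_k(I) where z_k(y) := f_k(F^{-1}(y_1+…+y_n)), has at most one solution, namely y_k = α_k := (1/(n−1)) ( (n−2)(g_k(d̄) − d_k) + Σ_{j≠k} (d_j − g_j(d̄)) ) with g_j := f_j ∘ F^{-1} and d̄ := (d_1+…+d_n)/n; moreover, if α_k ∈ f_k(I) for all k = 1,…,n, then (α_1,…,α_n) is indeed a solution of the system. -/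
open Finset

/-- `α_k = (1/(n−1)) ( (n−2)(g_k(d̄) − d_k) + ∑_{j≠k} (d_j − g_j(d̄)) )`, where
`g_j := f_j ∘ F⁻¹` and `d̄ := (d_1+⋯+d_n)/n`. -/
noncomputable def alpha {n : ℕ} (I : Set ℝ) (f : Fin n → ℝ → ℝ) (d : Fin n → ℝ)
    (k : Fin n) : ℝ :=
  (1 / ((n : ℝ) - 1)) *
    (((n : ℝ) - 2) * (f k (Function.invFunOn (Fsum f) I ((∑ j, d j) / n)) - d k) +
      ∑ j ∈ Finset.univ.erase k,
        (d j - f j (Function.invFunOn (Fsum f) I ((∑ i, d i) / n))))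


/-- for `d ∈ F(I)ⁿ`, the system `d_k = ∑_{j≠k} y_j + z_k(y)` with
`z_k(y) = f_k(F⁻¹(y_1+⋯+y_n))` and unknowns `y_k ∈ f_k(I)` has at most one solution,
namely `y = α`; and if `α_k ∈ f_k(I)` for all `k`, then `α` is indeed a solution. -/
theorem stmt8 {n : ℕ} (hn : 2 ≤ n) (I : Set ℝ) (hI : I.OrdConnected)
    (hne : ∃ a ∈ I, ∃ b ∈ I, a < b)
    (f : Fin n → ℝ → ℝ) (hf : CondStar I f)
    (d : Fin n → ℝ) (hd : ∀ k, d k ∈ Fsum f '' I) :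
    (∀ y : Fin n → ℝ, (∀ k, y k ∈ f k '' I) →
        (∀ k, d k = (∑ j ∈ Finset.univ.erase k, y j) +
          f k (Function.invFunOn (Fsum f) I (∑ j, y j))) →
        y = alpha I f d) ∧
    ((∀ k, alpha I f d k ∈ f k '' I) →
      ∀ k, d k = (∑ j ∈ Finset.univ.erase k, alpha I f d j) +
        f k (Function.invFunOn (Fsum f) I (∑ j, alpha I f d j))) := by
  classical
  have hnpos : (0:ℝ) < n := by
    have : 0 < n := lt_of_lt_of_le (by norm_num) hn
    exact_mod_cast this
  have hn0 : (n:ℝ) ≠ 0 := ne_of_gt hnpos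
  have hn1 : (n:ℝ) - 1 ≠ 0 := by
    have : (2:ℝ) ≤ n := by exact_mod_cast hn
    linarith
  -- F(I) is order connected
  have hcont : ContinuousOn (Fsum f) I := by
    exact continuousOn_finset_sum (f := f) Finset.univ
      (fun i _ => hf.1 i)
  have hFI : (Fsum f '' I).OrdConnected :=
    ((hI.isPreconnected).image _ hcont).ordConnected
  -- any value between two values of F(I) lies in F(I)
  have hbetween : ∀ s : ℝ, (∃ a ∈ Fsum f '' I, a ≤ s) → (∃ b ∈ Fsum f '' I, s ≤ b) →
      s ∈ Fsum f '' I := by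
    rintro s ⟨a, ha, has⟩ ⟨b, hb, hsb⟩
    exact hFI.out ha hb ⟨has, hsb⟩
  set D : ℝ := ∑ j, d j with hD
  set dbar : ℝ := D / n with hdbar_def
  -- d̄ ∈ F(I)
  have hdbarFI : dbar ∈ Fsum f '' I := by
    obtain ⟨j0, -, hj0⟩ := Finset.exists_min_image Finset.univ d
      ⟨⟨0, lt_of_lt_of_le (by norm_num) hn⟩, Finset.mem_univ _⟩
    obtain ⟨j1, -, hj1⟩ := Finset.exists_max_image Finset.univ d
      ⟨⟨0, lt_of_lt_of_le (by norm_num) hn⟩, Finset.mem_univ _⟩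
    have h1 : (n:ℝ) * d j0 ≤ D := by
      have := Finset.sum_le_sum (fun j (_ : j ∈ Finset.univ) => hj0 j (Finset.mem_univ j))
      simpa [Finset.card_univ, mul_comm] using this
    have h2 : D ≤ (n:ℝ) * d j1 := by
      have := Finset.sum_le_sum (fun j (_ : j ∈ Finset.univ) => hj1 j (Finset.mem_univ j))
      simpa [Finset.card_univ, mul_comm] using this
    refine hbetween dbar ⟨d j0, hd j0, ?_⟩ ⟨d j1, hd j1, ?_⟩
    · rw [hdbar_def, le_div_iff₀ hnpos]; linarith
    · rw [hdbar_def, div_le_iff₀ hnpos]; linarith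
  obtain ⟨a0, ha0I, ha0⟩ := hdbarFI
  set x0 : ℝ := Function.invFunOn (Fsum f) I dbar with hx0_def
  have hx0 : Fsum f x0 = dbar := Function.invFunOn_eq ⟨a0, ha0I, ha0⟩
  have hx0sum : ∑ k, f k x0 = dbar := by simpa [Fsum] using hx0
  -- simplification of α
  have halpha : ∀ k, alpha I f d k = dbar - d k + f k x0 := by
    intro k
    have hx0' : Function.invFunOn (Fsum f) I ((∑ j, d j) / n) = x0 := by
      rw [hx0_def, hdbar_def, hD]
    unfold alpha
    rw [hx0', Finset.sum_sub_distrib, Finset.sum_erase_eq_sub (Finset.mem_univ k),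
      Finset.sum_erase_eq_sub (Finset.mem_univ k), hx0sum, ← hD]
    have : D = n * dbar := by rw [hdbar_def]; field_simp
    rw [this]
    field_simp
    ring
  constructor
  · -- uniqueness
    intro y hy hsys
    choose x hxI hxy using hy
    -- S := ∑ y ∈ F(I)
    set S : ℝ := ∑ j, y j with hS
    have hSFI : S ∈ Fsum f '' I := by
      obtain ⟨m, -, hm⟩ := Finset.exists_min_image Finset.univ x
        ⟨⟨0, lt_of_lt_of_le (by norm_num) hn⟩, Finset.mem_univ _⟩
      obtain ⟨M, -, hM⟩ := Finset.exists_max_image Finset.univ x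
        ⟨⟨0, lt_of_lt_of_le (by norm_num) hn⟩, Finset.mem_univ _⟩
      rcases hf.2.1 with hmono | hanti
      · refine hbetween S ⟨Fsum f (x m), ⟨x m, hxI m, rfl⟩, ?_⟩
          ⟨Fsum f (x M), ⟨x M, hxI M, rfl⟩, ?_⟩
        · rw [hS]
          simp only [Fsum]
          refine Finset.sum_le_sum (fun j _ => ?_)
          rw [← hxy j]
          exact hmono j (hxI m) (hxI j) (hm j (Finset.mem_univ j))
        · rw [hS]
          simp only [Fsum]
          refine Finset.sum_le_sum (fun j _ => ?_)
          rw [← hxy j]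
          exact hmono j (hxI j) (hxI M) (hM j (Finset.mem_univ j))
      · refine hbetween S ⟨Fsum f (x M), ⟨x M, hxI M, rfl⟩, ?_⟩
          ⟨Fsum f (x m), ⟨x m, hxI m, rfl⟩, ?_⟩
        · rw [hS]
          simp only [Fsum]
          refine Finset.sum_le_sum (fun j _ => ?_)
          rw [← hxy j]
          exact hanti j (hxI j) (hxI M) (hM j (Finset.mem_univ j))
        · rw [hS]
          simp only [Fsum]
          refine Finset.sum_le_sum (fun j _ => ?_)
          rw [← hxy j]
          exact hanti j (hxI m) (hxI j) (hm j (Finset.mem_univ j))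
    set xS : ℝ := Function.invFunOn (Fsum f) I S with hxS_def
    have hxS : ∑ k, f k xS = S := by
      obtain ⟨aS, haSI, haS⟩ := hSFI
      simpa [Fsum] using (Function.invFunOn_eq ⟨aS, haSI, haS⟩ : Fsum f xS = S)
    have hsys' : ∀ k, d k = S - y k + f k xS := by
      intro k
      rw [hsys k, Finset.sum_erase_eq_sub (Finset.mem_univ k), ← hS]
    have hDS : D = n * S := by
      rw [hD]
      calc ∑ k, d k = ∑ k, (S - y k + f k xS) := by
            exact Finset.sum_congr rfl (fun k _ => hsys' k)
        _ = (n : ℝ) * S - S + S := by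
            rw [Finset.sum_add_distrib, Finset.sum_sub_distrib, ← hS, hxS,
              Finset.sum_const, Finset.card_univ, Fintype.card_fin, nsmul_eq_mul]
        _ = n * S := by ring
    have hSdbar : S = dbar := by
      rw [hdbar_def, hDS]; field_simp
    have hxSx0 : xS = x0 := by rw [hxS_def, hx0_def, hSdbar]
    funext k
    rw [halpha k]
    have := hsys' k
    rw [hxSx0, hSdbar] at this
    linarith
  · -- existence
    intro _ k
    have hsumalpha : ∑ j, alpha I f d j = dbar := by
      calc ∑ j, alpha I f d j = ∑ j, (dbar - d j + f j x0) := by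
            exact Finset.sum_congr rfl (fun j _ => halpha j)
        _ = (n:ℝ) * dbar - D + dbar := by
            rw [Finset.sum_add_distrib, Finset.sum_sub_distrib, ← hD, hx0sum,
              Finset.sum_const, Finset.card_univ, Fintype.card_fin, nsmul_eq_mul]
        _ = dbar := by
            have : D = n * dbar := by rw [hdbar_def]; field_simp
            rw [this]; ring
    rw [hsumalpha, ← hx0_def, Finset.sum_erase_eq_sub (Finset.mem_univ k),
      hsumalpha, halpha k]
    have : D = n * dbar := by rw [hdbar_def]; field_simp
    ring
end

section
/- Let n ≥ 2, let I ⊆ ℝ be a nondegenerate interval, let f = (f_1,…,f_n) satisfy condition (⋆), and let σ be a bijection of {1,…,n}. If the generalized quasi-arithmetic mean M_f is σ-balanced, then for every x = (x_1,…,x_n) ∈ Iⁿ and every k = 1,…,n one has F(v_{σ(k)}(x)) = f_{σ(k)}(M_f(x)) + Σ_{j=1}^{n} f_j(v_{σ(j)}(x)) − f_{σ(k)}(x_{σ(k)}), where v_k(x) := M_f(u_k(x, M_f(x))). -/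
open Finset

lemma sum_mem_image {n : ℕ} (hn : 0 < n) (I : Set ℝ) (hI : I.OrdConnected)
    (f : Fin n → ℝ → ℝ) (hc : ∀ k, ContinuousOn (f k) I)
    (hmono : (∀ k, MonotoneOn (f k) I) ∨ (∀ k, AntitoneOn (f k) I))
    (y : Fin n → ℝ) (hy : ∀ k, y k ∈ I) :
    (∑ k, f k (y k)) ∈ Fsum f '' I := by
  haveI : NeZero n := ⟨hn.ne'⟩
  obtain ⟨i, -, hi⟩ := Finset.exists_min_image Finset.univ y Finset.univ_nonempty
  obtain ⟨j, -, hj⟩ := Finset.exists_max_image Finset.univ y Finset.univ_nonempty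
  have hij : y i ≤ y j := hi j (Finset.mem_univ j)
  have hsub : Set.Icc (y i) (y j) ⊆ I := hI.out (hy i) (hy j)
  have hcont : ContinuousOn (Fsum f) (Set.Icc (y i) (y j)) := by
    apply continuousOn_finset_sum
    intro k _
    exact (hc k).mono hsub
  rcases hmono with hm | hm
  · have h1 : Fsum f (y i) ≤ ∑ k, f k (y k) :=
      Finset.sum_le_sum fun k _ => hm k (hy i) (hy k) (hi k (Finset.mem_univ k))
    have h2 : (∑ k, f k (y k)) ≤ Fsum f (y j) :=
      Finset.sum_le_sum fun k _ => hm k (hy k) (hy j) (hj k (Finset.mem_univ k))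
    have := intermediate_value_Icc hij hcont ⟨h1, h2⟩
    exact Set.image_mono hsub this
  · have h1 : Fsum f (y j) ≤ ∑ k, f k (y k) :=
      Finset.sum_le_sum fun k _ => hm k (hy k) (hy j) (hj k (Finset.mem_univ k))
    have h2 : (∑ k, f k (y k)) ≤ Fsum f (y i) :=
      Finset.sum_le_sum fun k _ => hm k (hy i) (hy k) (hi k (Finset.mem_univ k))
    have := intermediate_value_Icc' hij hcont ⟨h1, h2⟩
    exact Set.image_mono hsub this

lemma Fsum_Mf {n : ℕ} (hn : 0 < n) (I : Set ℝ) (hI : I.OrdConnected)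
    (f : Fin n → ℝ → ℝ) (hc : ∀ k, ContinuousOn (f k) I)
    (hmono : (∀ k, MonotoneOn (f k) I) ∨ (∀ k, AntitoneOn (f k) I))
    (y : Fin n → ℝ) (hy : ∀ k, y k ∈ I) :
    Fsum f (Mf I f y) = ∑ k, f k (y k) := by
  obtain ⟨a, ha, hay⟩ := sum_mem_image hn I hI f hc hmono y hy
  exact Function.invFunOn_eq ⟨a, ha, hay⟩

lemma Mf_mem {n : ℕ} (hn : 0 < n) (I : Set ℝ) (hI : I.OrdConnected)
    (f : Fin n → ℝ → ℝ) (hc : ∀ k, ContinuousOn (f k) I)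
    (hmono : (∀ k, MonotoneOn (f k) I) ∨ (∀ k, AntitoneOn (f k) I))
    (y : Fin n → ℝ) (hy : ∀ k, y k ∈ I) :
    Mf I f y ∈ I := by
  obtain ⟨a, ha, hay⟩ := sum_mem_image hn I hI f hc hmono y hy
  exact Function.invFunOn_mem ⟨a, ha, hay⟩

lemma sum_update_aux {n : ℕ} (f : Fin n → ℝ → ℝ) (x : Fin n → ℝ) (i : Fin n) (u : ℝ) :
    ∑ j, f j (Function.update x i u j) = f i u + (∑ j, f j (x j)) - f i (x i) := by
  have hfun : (fun j => f j (Function.update x i u j)) =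
      Function.update (fun j => f j (x j)) i (f i u) := by
    funext j
    by_cases h : j = i
    · subst h; simp
    · simp [Function.update_of_ne h]
  rw [hfun, Finset.sum_update_of_mem (Finset.mem_univ i),
    Finset.sdiff_singleton_eq_erase, Finset.sum_erase_eq_sub (Finset.mem_univ i)]
  ring

/-- if `M_f` is `σ`-balanced, then for all `x ∈ Iⁿ` and every `k`,
`F(v_{σ(k)}(x)) = f_{σ(k)}(M_f(x)) + ∑_j f_j(v_{σ(j)}(x)) − f_{σ(k)}(x_{σ(k)})`. -/
theorem stmt17 {n : ℕ} (hn : 2 ≤ n) (I : Set ℝ) (hI : I.OrdConnected)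
    (hne : ∃ a ∈ I, ∃ b ∈ I, a < b)
    (f : Fin n → ℝ → ℝ) (hf : CondStar I f) (σ : Equiv.Perm (Fin n))
    (hbal : SigmaBalanced I σ (Mf I f)) :
    ∀ x : Fin n → ℝ, (∀ k, x k ∈ I) → ∀ k : Fin n,
      Fsum f (vmap I f (σ k) x) =
        f (σ k) (Mf I f x) + (∑ j, f j (vmap I f (σ j) x)) - f (σ k) (x (σ k)) := by
  intro x hx k
  have hn0 : 0 < n := by omega
  obtain ⟨hc, hmono, -⟩ := hf
  set u := Mf I f x with hu_def
  have hu : u ∈ I := Mf_mem hn0 I hI f hc hmono x hx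
  have hupd : ∀ i : Fin n, ∀ j, Function.update x i u j ∈ I := by
    intro i j
    by_cases h : j = i
    · subst h; simpa using hu
    · rw [Function.update_of_ne h]; exact hx j
  have hFv : ∀ i : Fin n, Fsum f (vmap I f i x) =
      f i u + (∑ j, f j (x j)) - f i (x i) := by
    intro i
    rw [vmap, ← hu_def, Fsum_Mf hn0 I hI f hc hmono _ (hupd i), sum_update_aux]
  have hvI : ∀ i : Fin n, vmap I f i x ∈ I := fun i =>
    Mf_mem hn0 I hI f hc hmono _ (hupd i)
  have hbal' := hbal x hx
  have hFbal : Fsum f u = ∑ j, f j (vmap I f (σ j) x) := by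
    conv_lhs => rw [hu_def, ← hbal']
    exact Fsum_Mf hn0 I hI f hc hmono _ (fun j => hvI (σ j))
  have hFu : Fsum f u = ∑ j, f j (x j) := Fsum_Mf hn0 I hI f hc hmono x hx
  rw [hFv (σ k), ← hFbal, hFu]
end
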